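/- If G is a caterpillar of order n (a finite tree containing a path P such that every vertex not on P is adjacent to a vertex of P), then the burning number of G satisfies b(G) ≤ ⌈√n⌉. -/

import Mathlib

open Finset

private lemma sum_range_split (w : ℕ → ℕ) (a b : ℕ) :
    ∑ t ∈ range (a + b), w t = (∑ t ∈ range a, w t) + ∑ t ∈ range b, w (a + t) := by
  induction b with
  | zero => simp
  | succ n ih => rw [Nat.add_succ, Finset.sum_range_succ, ih, Finset.sum_range_succ]; ring

private lemma sum_ge_one (w : ℕ → ℕ) (a : ℕ) (hw : ∀ t, t < a → 1 ≤ w t) (s : ℕ) (hs : s < a) :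
    a + (w s - 1) ≤ ∑ t ∈ range a, w t := by
  have h : ∀ t ∈ range a, (1 + if t = s then w s - 1 else 0) ≤ w t := by
    intro t ht
    rw [mem_range] at ht
    split_ifs with h
    · subst h; have := hw t ht; omega
    · simpa using hw t ht
  calc a + (w s - 1) = ∑ t ∈ range a, (1 + if t = s then w s - 1 else 0) := by
        rw [Finset.sum_add_distrib, Finset.sum_const, Finset.sum_ite_eq' (range a) s (fun _ => w s - 1)]
        simp [hs]
    _ ≤ _ := Finset.sum_le_sum h

private lemma sum_ge_two (w : ℕ → ℕ) (a : ℕ) (hw : ∀ t, t < a → 1 ≤ w t)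
    (s s' : ℕ) (hs : s < a) (hs' : s' < a) (hne : s ≠ s') :
    a + (w s - 1) + (w s' - 1) ≤ ∑ t ∈ range a, w t := by
  have h : ∀ t ∈ range a,
      (1 + (if t = s then w s - 1 else 0) + if t = s' then w s' - 1 else 0) ≤ w t := by
    intro t ht
    rw [mem_range] at ht
    rcases eq_or_ne t s with rfl | h1
    · rw [if_pos rfl, if_neg hne]; have := hw t ht; omega
    rcases eq_or_ne t s' with rfl | h2
    · rw [if_neg h1, if_pos rfl]; have := hw t ht; omega
    · rw [if_neg h1, if_neg h2]; simpa using hw t ht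
  calc a + (w s - 1) + (w s' - 1)
      = ∑ t ∈ range a, (1 + (if t = s then w s - 1 else 0) + if t = s' then w s' - 1 else 0) := by
        rw [Finset.sum_add_distrib, Finset.sum_add_distrib, Finset.sum_const,
          Finset.sum_ite_eq' (range a) s (fun _ => w s - 1),
          Finset.sum_ite_eq' (range a) s' (fun _ => w s' - 1)]
        simp [hs, hs']
    _ ≤ _ := Finset.sum_le_sum h

/-- Combining one ball covering a prefix `[0,a)` with a solution for the suffix. -/
private lemma cover_step (K a m : ℕ) (w : ℕ → ℕ) (c₀ : ℕ) (h0 : c₀ < m)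
    (hcov : ∀ t, t < a → t < m → Nat.dist t c₀ + (if 2 ≤ w t then 1 else 0) ≤ K)
    (hrec : ∃ c : Fin K → ℕ, ∀ t', t' < m - a → ∃ j : Fin K, c j < m - a ∧
        Nat.dist t' (c j) + (if 2 ≤ w (a + t') then 1 else 0) ≤ K - 1 - j.val) :
    ∃ c : Fin (K+1) → ℕ, ∀ t, t < m → ∃ i : Fin (K+1), c i < m ∧
        Nat.dist t (c i) + (if 2 ≤ w t then 1 else 0) ≤ (K+1) - 1 - i.val := by
  obtain ⟨c', hc'⟩ := hrec
  refine ⟨Fin.cases c₀ (fun j => a + c' j), fun t ht => ?_⟩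
  by_cases hta : t < a
  · exact ⟨0, by simpa using h0, by simpa using hcov t hta ht⟩
  · push_neg at hta
    obtain ⟨j, hj1, hj2⟩ := hc' (t - a) (by omega)
    refine ⟨j.succ, ?_, ?_⟩
    · simpa using by omega
    · have hd : Nat.dist t (a + c' j) = Nat.dist (t - a) (c' j) := by
        simp [Nat.dist]; omega
      have : (a + (t - a)) = t := by omega
      rw [this] at hj2
      simp only [Fin.cases_succ, Fin.val_succ]
      rw [hd]
      have := j.isLt
      omega

/-- Combining two balls covering a prefix `[0,a)` with a solution for the suffix. -/
private lemma cover_step2 (K a m : ℕ) (w : ℕ → ℕ) (c₁ c₀ : ℕ) (h1 : c₁ < m) (h0 : c₀ < m)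
    (hcov : ∀ t, t < a → t < m →
      (Nat.dist t c₁ + (if 2 ≤ w t then 1 else 0) ≤ K + 1) ∨
      (Nat.dist t c₀ + (if 2 ≤ w t then 1 else 0) ≤ K))
    (hrec : ∃ c : Fin K → ℕ, ∀ t', t' < m - a → ∃ j : Fin K, c j < m - a ∧
        Nat.dist t' (c j) + (if 2 ≤ w (a + t') then 1 else 0) ≤ K - 1 - j.val) :
    ∃ c : Fin (K+2) → ℕ, ∀ t, t < m → ∃ i : Fin (K+2), c i < m ∧
        Nat.dist t (c i) + (if 2 ≤ w t then 1 else 0) ≤ (K+2) - 1 - i.val := by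
  obtain ⟨c', hc'⟩ := hrec
  refine ⟨Fin.cases c₁ (Fin.cases c₀ (fun j => a + c' j)), fun t ht => ?_⟩
  by_cases hta : t < a
  · rcases hcov t hta ht with h | h
    · exact ⟨0, by simpa using h1, by simpa using h⟩
    · refine ⟨(0 : Fin (K+1)).succ, ?_, ?_⟩
      · simp only [Fin.cases_succ, Fin.cases_zero]; simpa using h0
      · simp only [Fin.cases_succ, Fin.cases_zero]; simpa using h
  · push_neg at hta
    obtain ⟨j, hj1, hj2⟩ := hc' (t - a) (by omega)
    refine ⟨j.succ.succ, ?_, ?_⟩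
    · simpa using by omega
    · have hd : Nat.dist t (a + c' j) = Nat.dist (t - a) (c' j) := by
        simp [Nat.dist]; omega
      have : (a + (t - a)) = t := by omega
      rw [this] at hj2
      simp only [Fin.cases_succ, Fin.val_succ]
      rw [hd]
      have := j.isLt
      omega

private lemma cover : ∀ k m : ℕ, ∀ w : ℕ → ℕ,
    (∀ t, t < m → 1 ≤ w t) →
    (∀ t, t + 1 = m → w t = 1) →
    (∑ t ∈ range m, w t) ≤ k * k →
    ∃ c : Fin k → ℕ, ∀ t, t < m →
      ∃ i : Fin k, c i < m ∧ Nat.dist t (c i) + (if 2 ≤ w t then 1 else 0) ≤ k - 1 - i.val := by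
  intro k
  induction k using Nat.strong_induction_on with
  | _ k IH =>
  intro m w hw htail hsum
  rcases Nat.eq_zero_or_pos m with rfl | hm
  · exact ⟨fun _ => 0, fun t ht => absurd ht (by omega)⟩
  have hw0 : 1 ≤ w 0 := hw 0 hm
  have hw0sum : w 0 ≤ ∑ t ∈ range m, w t :=
    Finset.single_le_sum (fun t _ => Nat.zero_le _) (mem_range.mpr hm)
  rcases Nat.eq_zero_or_pos k with rfl | hk
  · have : ∑ t ∈ range m, w t ≤ 0 := by simpa using hsum
    omega
  set τ : ℕ := if 2 ≤ w 0 then 1 else 0 with hτ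
  have hτ01 : (τ = 0 ∧ w 0 = 1) ∨ (τ = 1 ∧ 2 ≤ w 0) := by
    rw [hτ]; split_ifs with h
    · exact Or.inr ⟨rfl, h⟩
    · exact Or.inl ⟨rfl, by omega⟩
  have hτ1 : τ ≤ 1 := by omega
  have hk1τ : 1 + τ ≤ k := by
    by_contra hcon
    have hk1 : k = 1 := by omega
    have hτe : τ = 1 := by omega
    subst hk1
    have : ∑ t ∈ range m, w t ≤ 1 := by simpa using hsum
    omega
  obtain ⟨K, rfl⟩ : ∃ K, k = K + 1 := ⟨k - 1, by omega⟩
  have hkk : (K + 1) * (K + 1) = K * K + 2 * K + 1 := by ring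
  -- generic recursion builder for a cut point a with enough prefix weight
  have hrecgen : ∀ a K', K' < K + 1 → a ≤ m →
      (a = m ∨ (K + 1) * (K + 1) ≤ (∑ t ∈ range a, w t) + K' * K') →
      ∃ c : Fin K' → ℕ, ∀ t', t' < m - a → ∃ j : Fin K', c j < m - a ∧
        Nat.dist t' (c j) + (if 2 ≤ w (a + t') then 1 else 0) ≤ K' - 1 - j.val := by
    intro a K' hK' ham hpre
    apply IH K' hK' (m - a) (fun t => w (a + t)) (fun t ht => hw _ (by omega))
      (fun t ht => htail _ (by omega))
    have hsplit := sum_range_split w a (m - a)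
    rw [show a + (m - a) = m by omega] at hsplit
    rcases hpre with ha | hpre
    · have : m - a = 0 := by omega
      rw [this]
      simp
    · linarith
  by_cases hA : m + τ ≤ K + 1
  · -- Subcase A: one ball centered at m-1 covers everything
    refine cover_step K m m w (m-1) (by omega) ?_ (hrecgen m K (by omega) le_rfl (Or.inl rfl))
    intro t hta htm
    rcases Nat.eq_zero_or_pos t with rfl | ht1
    · rw [← hτ]; simp only [Nat.dist]; omega
    · have hle : (if 2 ≤ w t then 1 else 0) ≤ 1 := by split_ifs <;> omega
      simp only [Nat.dist] at *; omega
  · push_neg at hA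
    set c0 : ℕ := K - τ with hc0def
    set A' : ℕ := 2*K - τ with hA'def
    by_cases hB1 : m ≤ A'
    · -- Subcase B1: one ball centered at c0 covers everything
      refine cover_step K m m w c0 (by omega) ?_ (hrecgen m K (by omega) le_rfl (Or.inl rfl))
      intro t hta htm
      rcases Nat.eq_zero_or_pos t with rfl | ht1
      · rw [← hτ]; simp only [Nat.dist]; omega
      · have hle : (if 2 ≤ w t then 1 else 0) ≤ 1 := by split_ifs <;> omega
        simp only [Nat.dist] at *; omega
    · push_neg at hB1
      by_cases hlightA : w A' < 2
      · -- Subcase B2a: position A' is light; cut at A'+1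
        have hwA' : w A' = 1 := by have := hw A' (by omega); omega
        have hpre := sum_ge_one w (A'+1) (fun s hs => hw s (by omega)) 0 (by omega)
        refine cover_step K (A'+1) m w c0 (by omega) ?_
          (hrecgen (A'+1) K (by omega) (by omega) (Or.inr (by rw [hkk]; omega)))
        intro t hta htm
        rcases Nat.eq_zero_or_pos t with rfl | ht1
        · rw [← hτ]; simp only [Nat.dist]; omega
        rcases eq_or_ne t A' with rfl | htA'
        · rw [if_neg (by omega)]; simp only [Nat.dist]; omega
        · have hle : (if 2 ≤ w t then 1 else 0) ≤ 1 := by split_ifs <;> omega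
          simp only [Nat.dist] at *; omega
      · push_neg at hlightA
        by_cases hPbig : 2*K + 1 ≤ ∑ t ∈ range A', w t
        · -- Subcase B2b-i: heavy at A' but enough weight before it; cut at A'
          refine cover_step K A' m w c0 (by omega) ?_
            (hrecgen A' K (by omega) (by omega) (Or.inr (by rw [hkk]; omega)))
          intro t hta htm
          rcases Nat.eq_zero_or_pos t with rfl | ht1
          · rw [← hτ]; simp only [Nat.dist]; omega
          · have hle : (if 2 ≤ w t then 1 else 0) ≤ 1 := by split_ifs <;> omega
            simp only [Nat.dist] at *; omega
        · -- Subcase B2b-ii: BLOCKED configuration, use two balls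
          push_neg at hPbig
          have hA'1 : 1 ≤ A' := by
            rcases hτ01 with ⟨he, h1⟩ | ⟨he, h1⟩ <;> by_contra hcon
            · have : A' = 0 := by omega
              rw [this] at hlightA; omega
            · omega
          have hKτ : 1 + τ ≤ K := by
            rcases hτ01 with ⟨he, h1⟩ | ⟨he, h1⟩
            · omega
            · by_contra hcon
              have hK1 : K = 1 := by omega
              have htl := htail (m-1) (by omega)
              have hm3 : 3 ≤ m := by
                by_contra hm2'
                have : m = 2 := by omega
                rw [this] at htl; simp at htl
                have : A' = 1 := by omega
                rw [this] at hlightA; omega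
              have h5 := sum_ge_two w m hw 0 1 (by omega) (by omega) (by omega)
              have : A' = 1 := by omega
              rw [this] at hlightA
              rw [hK1] at hsum
              omega
          have hw0e : w 0 = 1 + τ := by
            rcases hτ01 with ⟨he, h1⟩ | ⟨he, h1⟩
            · omega
            · have := sum_ge_one w A' (fun s hs => hw s (by omega)) 0 (by omega)
              omega
          have hlightmid : ∀ t, 1 ≤ t → t < A' → w t = 1 := by
            intro t h1t htA
            by_contra hne
            have := sum_ge_two w A' (fun s hs => hw s (by omega)) 0 t (by omega) htA (by omega)
            have := hw t (by omega)
            omega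
          have hm2 : A' + 2 ≤ m := by
            have htl := htail (m-1) (by omega)
            by_contra hcon
            have he : A' = m - 1 := by omega
            rw [he] at hlightA
            omega
          obtain ⟨K2, rfl⟩ : ∃ K2, K = K2 + 1 := ⟨K - 1, by omega⟩
          set c0' : ℕ := K2 - τ with hc0'def
          set c1 : ℕ := min (3*K2 + 2 - τ) (m-1) with hc1def
          set cut4 : ℕ := 4*K2 + 3 - τ with hcut4def
          set a : ℕ := if (cut4 < m ∧ 2 ≤ w cut4) then cut4 else min m (cut4+1) with hadef
          have haval : (a = cut4 ∧ cut4 < m ∧ 2 ≤ w cut4) ∨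
              (a = min m (cut4 + 1) ∧ (cut4 < m → w cut4 = 1)) := by
            rw [hadef]; split_ifs with hc
            · exact Or.inl ⟨rfl, hc.1, hc.2⟩
            · refine Or.inr ⟨rfl, fun hltm => ?_⟩
              have := hw cut4 hltm
              rw [not_and] at hc
              by_cases h' : cut4 < m
              · have := hc h'; omega
              · omega
          have ham : a ≤ m := by rcases haval with ⟨h1, h2, h3⟩ | ⟨h1, h2⟩ <;> omega
          have hkk2 : (K2+1+1)*(K2+1+1) = K2*K2 + 4*K2 + 4 := by ring
          have hsuff := hrecgen a K2 (by omega) ham ?pre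
          case pre =>
            rcases eq_or_lt_of_le ham with he | hlt
            · exact Or.inl he
            · right
              have hA'a : A' < a := by rcases haval with ⟨h1, h2, h3⟩ | ⟨h1, h2⟩ <;> omega
              have hs := sum_ge_two w a (fun s hs => hw s (by omega)) 0 A' (by omega) hA'a
                (by omega)
              have hage : cut4 ≤ a := by rcases haval with ⟨h1, h2, h3⟩ | ⟨h1, h2⟩ <;> omega
              rw [hkk2]
              omega
          refine cover_step2 K2 a m w c1 c0' (by omega) (by omega) ?_ hsuff
          intro t hta htm
          by_cases hsmall : t + 2 ≤ A'
          · right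
            rcases Nat.eq_zero_or_pos t with rfl | ht1
            · rw [← hτ]; simp only [Nat.dist]; omega
            · have hwt := hlightmid t (by omega) (by omega)
              rw [if_neg (by omega)]; simp only [Nat.dist]; omega
          · left
            by_cases hheavy : 2 ≤ w t
            · rw [if_pos hheavy]
              have htA : A' ≤ t := by
                by_contra hcon
                have : t = A' - 1 := by omega
                have hwt := hlightmid t (by omega) (by omega)
                omega
              have htm1 : t + 1 < m := by
                have htl := htail (m-1) (by omega)
                by_contra hcon
                have he : t = m - 1 := by omega
                rw [he] at hheavy
                omega
              rcases le_or_gt t c1 with h | h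
              · simp only [Nat.dist]; omega
              · have htcut : t < cut4 := by
                  rcases haval with ⟨h1, h2, h3⟩ | ⟨h1, h2⟩
                  · omega
                  · have hta' : t ≤ cut4 := by omega
                    rcases eq_or_lt_of_le hta' with he | h'
                    · have hcm : cut4 < m := by omega
                      have := h2 hcm
                      rw [← he] at this
                      omega
                    · omega
                simp only [Nat.dist]; omega
            · rw [if_neg hheavy]
              rcases le_or_gt t c1 with h | h
              · simp only [Nat.dist]; omega
              · have : t ≤ cut4 := by
                  rcases haval with ⟨h1, h2, h3⟩ | ⟨h1, h2⟩ <;> omega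
                simp only [Nat.dist]; omega


private lemma path_getVert_inj {V : Type*} {G : SimpleGraph V} :
    ∀ {u v : V} (p : G.Walk u v), p.IsPath → ∀ i j, i ≤ p.length → j ≤ p.length →
      p.getVert i = p.getVert j → i = j := by
  intro u v p
  induction p with
  | nil => intro _ i j hi hj _; simp at hi hj; omega
  | @cons a b c h q ih =>
    intro hp i j hi hj heq
    rw [SimpleGraph.Walk.cons_isPath_iff] at hp
    match i, j with
    | 0, 0 => rfl
    | 0, j+1 =>
      exfalso
      apply hp.2
      rw [SimpleGraph.Walk.mem_support_iff_exists_getVert]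
      refine ⟨j, ?_, ?_⟩
      · rw [← SimpleGraph.Walk.getVert_cons_succ q h, ← heq, SimpleGraph.Walk.getVert_zero]
      · simp [SimpleGraph.Walk.length_cons] at hj; omega
    | i+1, 0 =>
      exfalso
      apply hp.2
      rw [SimpleGraph.Walk.mem_support_iff_exists_getVert]
      refine ⟨i, ?_, ?_⟩
      · rw [← SimpleGraph.Walk.getVert_cons_succ q h, heq, SimpleGraph.Walk.getVert_zero]
      · simp [SimpleGraph.Walk.length_cons] at hi; omega
    | i+1, j+1 =>
      have := ih hp.1 i j (by simp [SimpleGraph.Walk.length_cons] at hi; omega)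
        (by simp [SimpleGraph.Walk.length_cons] at hj; omega)
        (by rwa [SimpleGraph.Walk.getVert_cons_succ, SimpleGraph.Walk.getVert_cons_succ] at heq)
      omega

private lemma walk_dist_le' {V : Type*} {G : SimpleGraph V} (hc : G.Connected)
    {u v : V} (p : G.Walk u v) :
    ∀ d a, a + d ≤ p.length → G.dist (p.getVert a) (p.getVert (a + d)) ≤ d := by
  intro d
  induction d with
  | zero => intro a _; simp
  | succ n ih =>
    intro a ha
    have h1 := ih a (by omega)
    have h2 : G.dist (p.getVert (a+n)) (p.getVert (a+n+1)) ≤ 1 := by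
      have hadj := p.adj_getVert_succ (i := a+n) (by omega)
      have := SimpleGraph.dist_le (SimpleGraph.Walk.cons hadj SimpleGraph.Walk.nil)
      simpa using this
    calc G.dist (p.getVert a) (p.getVert (a + (n+1)))
        ≤ G.dist (p.getVert a) (p.getVert (a+n)) + G.dist (p.getVert (a+n)) (p.getVert (a+n+1)) := by
          rw [show a + (n+1) = a+n+1 by omega]; exact hc.dist_triangle
      _ ≤ n + 1 := by omega

private lemma getVert_dist_le {V : Type*} {G : SimpleGraph V} (hc : G.Connected) {u v : V}
    (p : G.Walk u v) (a b : ℕ) (ha : a ≤ p.length) (hb : b ≤ p.length) :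
    G.dist (p.getVert a) (p.getVert b) ≤ Nat.dist a b := by
  rcases le_total a b with h | h
  · have := walk_dist_le' hc p (b - a) a (by omega)
    rw [show a + (b-a) = b by omega] at this
    rwa [Nat.dist_eq_sub_of_le h]
  · have := walk_dist_le' hc p (a - b) b (by omega)
    rw [show b + (a-b) = a by omega] at this
    rw [Nat.dist_comm, Nat.dist_eq_sub_of_le h, SimpleGraph.dist_comm]
    exact this


/-- A caterpillar: a tree containing a path `P` such that every vertex not on `P`
is adjacent to a vertex of `P`. -/
def IsCaterpillar {V : Type*} (T : SimpleGraph V) : Prop :=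
  T.IsTree ∧ ∃ (u v : V) (p : T.Walk u v), p.IsPath ∧
    ∀ w, w ∉ p.support → ∃ x ∈ p.support, T.Adj w x

/-- The burning number of `G`: the least `k` for which there is a burning
sequence `x 0, …, x (k-1)` (where `x i` is the `(i+1)`-st burned source) such
that every vertex `v` satisfies `dist v (x i) ≤ k - (i + 1)` for some `i`. -/
noncomputable def burningNumber {V : Type*} (G : SimpleGraph V) : ℕ :=
  sInf {k : ℕ | ∃ x : Fin k → V, ∀ v : V, ∃ i : Fin k,
    G.dist v (x i) ≤ k - (i.val + 1)}

/-- The burning number of a caterpillar of order `n` is at most `⌈√n⌉`. -/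
theorem burningNumber_le_of_isCaterpillar
    {V : Type*} [Fintype V] (G : SimpleGraph V) (hcat : IsCaterpillar G) :
    burningNumber G ≤ ⌈Real.sqrt (Fintype.card V)⌉₊ := by
  classical
  obtain ⟨htree, u₀, v₀, p₀, hp₀, hdom₀⟩ := hcat
  have hconn : G.Connected := htree.isConnected
  set k := ⌈Real.sqrt (Fintype.card V)⌉₊ with hkdef
  -- pick a dominating path of maximal length
  set S : Set ℕ := {L | ∃ (x y : V) (q : G.Walk x y), q.IsPath ∧
      (∀ z, z ∉ q.support → ∃ s ∈ q.support, G.Adj z s) ∧ q.length = L} with hSdef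
  have hSne : S.Nonempty := ⟨p₀.length, u₀, v₀, p₀, hp₀, hdom₀, rfl⟩
  have hSbdd : BddAbove S := by
    refine ⟨Fintype.card V, fun L hL => ?_⟩
    obtain ⟨x, y, q, hq, _, rfl⟩ := hL
    exact hq.length_lt.le
  obtain ⟨u, v, p, hp, hdom, hlen⟩ := Nat.sSup_mem hSne hSbdd
  have hmax : ∀ z, z ∉ p.support → ¬ G.Adj z v := by
    intro z hz hadj
    have hzrev : z ∉ p.reverse.support := by
      rw [SimpleGraph.Walk.support_reverse]; simpa using hz
    have hp' : (SimpleGraph.Walk.cons hadj p.reverse).IsPath :=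
      SimpleGraph.Walk.IsPath.cons hp.reverse hzrev
    have hmem : (SimpleGraph.Walk.cons hadj p.reverse).length ∈ S := by
      refine ⟨z, u, _, hp', ?_, rfl⟩
      intro z' hz'
      have hz'p : z' ∉ p.support := by
        rw [SimpleGraph.Walk.support_cons, SimpleGraph.Walk.support_reverse] at hz'
        simp only [List.mem_cons, List.mem_reverse] at hz'
        push_neg at hz'
        exact hz'.2
      obtain ⟨s, hs, hadj'⟩ := hdom z' hz'p
      refine ⟨s, ?_, hadj'⟩
      rw [SimpleGraph.Walk.support_cons, SimpleGraph.Walk.support_reverse]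
      simp only [List.mem_cons, List.mem_reverse]
      exact Or.inr hs
    have hle := le_csSup hSbdd hmem
    rw [SimpleGraph.Walk.length_cons, SimpleGraph.Walk.length_reverse] at hle
    omega
  set m := p.length + 1 with hmdef
  have hmemx : ∀ x : V, ∃ t, t ≤ p.length ∧
      (p.getVert t = x ∨ (x ∉ p.support ∧ G.Adj x (p.getVert t))) := by
    intro x
    by_cases hx : x ∈ p.support
    · obtain ⟨t, ht1, ht2⟩ := SimpleGraph.Walk.mem_support_iff_exists_getVert.mp hx
      exact ⟨t, ht2, Or.inl ht1⟩
    · obtain ⟨s, hs, hadj⟩ := hdom x hx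
      obtain ⟨t, ht1, ht2⟩ := SimpleGraph.Walk.mem_support_iff_exists_getVert.mp hs
      exact ⟨t, ht2, Or.inr ⟨hx, by rwa [ht1]⟩⟩
  set pos : V → ℕ := fun x => (hmemx x).choose with hposdef
  have hpos : ∀ x, pos x ≤ p.length ∧
      (p.getVert (pos x) = x ∨ (x ∉ p.support ∧ G.Adj x (p.getVert (pos x)))) :=
    fun x => (hmemx x).choose_spec
  set w : ℕ → ℕ := fun t => (Finset.univ.filter (fun x => pos x = t)).card with hwdef
  have hposgv : ∀ t, t ≤ p.length → pos (p.getVert t) = t := by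
    intro t ht
    obtain ⟨h1, h2⟩ := hpos (p.getVert t)
    rcases h2 with h | h
    · exact path_getVert_inj p hp _ _ h1 ht h
    · exact absurd (SimpleGraph.Walk.mem_support_iff_exists_getVert.mpr ⟨t, rfl, ht⟩) h.1
  have hw1 : ∀ t, t < m → 1 ≤ w t := by
    intro t ht
    exact Finset.card_pos.mpr ⟨p.getVert t, by simp [hposgv t (by omega)]⟩
  have hheavy : ∀ x, x ∉ p.support → 2 ≤ w (pos x) := by
    intro x hx
    have hgv : p.getVert (pos x) ∈ p.support :=
      SimpleGraph.Walk.mem_support_iff_exists_getVert.mpr ⟨pos x, rfl, (hpos x).1⟩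
    have hxne : x ≠ p.getVert (pos x) := fun he => hx (he ▸ hgv)
    have hsub : ({x, p.getVert (pos x)} : Finset V) ⊆
        Finset.univ.filter (fun y => pos y = pos x) := by
      intro y hy
      simp only [Finset.mem_insert, Finset.mem_singleton] at hy
      simp only [Finset.mem_filter, Finset.mem_univ, true_and]
      rcases hy with rfl | rfl
      · rfl
      · exact hposgv _ (hpos x).1
    calc 2 = ({x, p.getVert (pos x)} : Finset V).card := (Finset.card_pair hxne).symm
      _ ≤ _ := Finset.card_le_card hsub
  have htail : ∀ t, t + 1 = m → w t = 1 := by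
    intro t ht
    have htp : t = p.length := by omega
    show (Finset.univ.filter (fun x => pos x = t)).card = 1
    have hfib : Finset.univ.filter (fun x => pos x = t) = {p.getVert t} := by
      apply Finset.eq_singleton_iff_unique_mem.mpr
      constructor
      · simp [hposgv t (by omega)]
      · intro x hx
        simp only [Finset.mem_filter, Finset.mem_univ, true_and] at hx
        obtain ⟨h1, h2⟩ := hpos x
        rcases h2 with h | ⟨hns, hadj⟩
        · rw [← h, hx]
        · exfalso
          rw [hx, htp] at hadj
          rw [SimpleGraph.Walk.getVert_length] at hadj
          exact hmax x hns hadj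
    rw [hfib, Finset.card_singleton]
  have hsum : ∑ t ∈ Finset.range m, w t = Fintype.card V := by
    exact (Finset.card_eq_sum_card_fiberwise
      (fun x _ => Finset.mem_range.mpr (by have := (hpos x).1; omega))).symm
  have hcard : Fintype.card V ≤ k * k := by
    have h1 : Real.sqrt (Fintype.card V) ≤ (k : ℝ) := Nat.le_ceil _
    have h2 : ((Fintype.card V : ℝ)) ≤ (k : ℝ) * (k : ℝ) := by
      nlinarith [Real.sq_sqrt (show (0:ℝ) ≤ ((Fintype.card V : ℕ) : ℝ) by positivity),
        Real.sqrt_nonneg ((Fintype.card V : ℕ) : ℝ)]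
    exact_mod_cast h2
  obtain ⟨c, hc⟩ := cover k m w hw1 htail (by omega)
  have hkmem : k ∈ {k : ℕ | ∃ x : Fin k → V, ∀ v : V, ∃ i : Fin k,
      G.dist v (x i) ≤ k - (i.val + 1)} := by
    refine ⟨fun i => p.getVert (c i), fun x => ?_⟩
    obtain ⟨i, hci, hbound⟩ := hc (pos x) (by have := (hpos x).1; omega)
    refine ⟨i, ?_⟩
    show G.dist x (p.getVert (c i)) ≤ k - (i.val + 1)
    have hd : G.dist (p.getVert (pos x)) (p.getVert (c i)) ≤ Nat.dist (pos x) (c i) :=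
      getVert_dist_le hconn p _ _ (hpos x).1 (by omega)
    obtain ⟨h1, h2⟩ := hpos x
    rcases h2 with h | ⟨hns, hadj⟩
    · rw [← h]
      have hite : (0:ℕ) ≤ if 2 ≤ w (pos x) then 1 else 0 := Nat.zero_le _
      have hival := i.isLt
      omega
    · have hδ : 2 ≤ w (pos x) := hheavy x hns
      rw [if_pos hδ] at hbound
      have hx1 : G.dist x (p.getVert (pos x)) ≤ 1 := by
        have := SimpleGraph.dist_le (SimpleGraph.Walk.cons hadj SimpleGraph.Walk.nil)
        simpa using this
      have htri : G.dist x (p.getVert (c i)) ≤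
          G.dist x (p.getVert (pos x)) + G.dist (p.getVert (pos x)) (p.getVert (c i)) :=
        hconn.dist_triangle
      have hival := i.isLt
      omega
  exact Nat.sInf_le hkmem
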